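/- Let A be an artin algebra, and let 𝒞 and 𝒟 be components of Γ_A with the same composition factors such that 𝒞 ≠ 𝒟 and 𝒞 does not lie on a short cycle in the component quiver Σ_A. Then 𝒞 is a semi-regular component of Γ_A, i.e., 𝒞 does not contain both a projective module and an injective module. -/

import Mathlib

/-!
# Common framework: Auslander–Reiten theory for artin algebras

We work with right `A`-modules, realized as objects of `ModuleCat Aᵐᵒᵖ`.
We develop: finitely generated indecomposable modules, the (infinite) radical of
the module category, irreducible morphisms, almost split sequences and the
Auslander–Reiten translation, components of the Auslander–Reiten quiver, the
component quiver `Σ_A`, composition factors and the condition `[M] = [N]`,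
translation quivers, stable tubes, ray/coray tubes (via ray insertions),
separating families of components, and (almost) concealed canonical algebras
(via the Lenzing–de la Peña characterization).
-/

open CategoryTheory MulOpposite CategoryTheory.Limits

namespace ARTheory

/-- The category of right `A`-modules (as left `Aᵐᵒᵖ`-modules), in `Type 0`. -/
abbrev RMod (A : Type) [Ring A] : Type 1 := ModuleCat.{0} Aᵐᵒᵖ

variable {A : Type} [Ring A]

/-- `M` is a finitely generated right `A`-module. -/
def fgMod (M : RMod A) : Prop := Module.Finite Aᵐᵒᵖ M

/-- `M` is an indecomposable module: it is nonzero and its endomorphism ring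
has no nontrivial idempotents. -/
def Indec (M : RMod A) : Prop :=
  (¬ Subsingleton M) ∧ ∀ e : M ⟶ M, e ≫ e = e → e = 0 ∨ e = 𝟙 M

/-- A vertex of the Auslander–Reiten quiver `Γ_A`: a finitely generated
indecomposable right `A`-module. -/
def Vertex (M : RMod A) : Prop := fgMod M ∧ Indec M

/-- `f` is a section (split monomorphism). -/
def IsSectionHom {X Y : RMod A} (f : X ⟶ Y) : Prop := ∃ r : Y ⟶ X, f ≫ r = 𝟙 X

/-- `f` is a retraction (split epimorphism). -/
def IsRetractionHom {X Y : RMod A} (f : X ⟶ Y) : Prop := ∃ s : Y ⟶ X, s ≫ f = 𝟙 Y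

/-- Irreducible morphism in `mod A`. -/
def Irred {X Y : RMod A} (f : X ⟶ Y) : Prop :=
  ¬ IsSectionHom f ∧ ¬ IsRetractionHom f ∧
  ∀ (Z : RMod A), fgMod Z → ∀ (g : X ⟶ Z) (h : Z ⟶ Y), f = g ≫ h →
    IsSectionHom g ∨ IsRetractionHom h

/-- Arrow of the Auslander–Reiten quiver: an irreducible morphism between
finitely generated indecomposable modules. -/
def ARArrow (M N : RMod A) : Prop :=
  Vertex M ∧ Vertex N ∧ ∃ f : M ⟶ N, Irred f

/-- `f` belongs to the Jacobson radical `rad_A` of `mod A`: no composition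
through `f` between indecomposables is an isomorphism. -/
def InRad {X Y : RMod A} (f : X ⟶ Y) : Prop :=
  ∀ (Z : RMod A), fgMod Z → Indec Z → ∀ (g : Z ⟶ X) (h : Y ⟶ Z), ¬ IsIso (g ≫ f ≫ h)

/-- `RadComp n f` : `f` is a composite of `n+1` radical morphisms (through
finitely generated modules). -/
def RadComp : ℕ → ∀ {X Y : RMod A}, (X ⟶ Y) → Prop
  | 0, _, _, f => InRad f
  | n+1, _, _, f => ∃ (Z : RMod A) (g : _ ⟶ Z) (h : Z ⟶ _),
      fgMod Z ∧ InRad g ∧ RadComp n h ∧ f = g ≫ h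

/-- `f ∈ rad_A^{n+1}(X, Y)` : `f` is a sum of composites of `n+1` radical morphisms. -/
def InRadPow (n : ℕ) {X Y : RMod A} (f : X ⟶ Y) : Prop :=
  f ∈ AddSubgroup.closure {g : X ⟶ Y | RadComp n g}

/-- `f ∈ rad_A^∞(X, Y)`, the infinite radical of `mod A` (intersection of all
powers of the radical). -/
def InRadInf {X Y : RMod A} (f : X ⟶ Y) : Prop := ∀ n : ℕ, InRadPow n f

/-- Generating relation for the components of `Γ_A`: isomorphism or an arrow in
either direction. -/
def ARRel (M N : RMod A) : Prop :=
  Vertex M ∧ Vertex N ∧ (Nonempty (M ≅ N) ∨ ARArrow M N ∨ ARArrow N M)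

/-- `M` and `N` lie in the same connected component of `Γ_A`. -/
def SameComp : RMod A → RMod A → Prop := Relation.ReflTransGen ARRel

/-- `C` is (the set of modules belonging to) a connected component of the
Auslander–Reiten quiver `Γ_A`. -/
def IsComponent (C : Set (RMod A)) : Prop :=
  ∃ M, Vertex M ∧ C = {N | Vertex N ∧ SameComp M N}

/-- Arrow `C → D` of the component quiver `Σ_A`:
`rad_A^∞(X, Y) ≠ 0` for some `X ∈ C`, `Y ∈ D`. -/
def SigmaArrow (C D : Set (RMod A)) : Prop :=
  ∃ X ∈ C, ∃ Y ∈ D, ∃ f : X ⟶ Y, f ≠ 0 ∧ InRadInf f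

/-- `C` lies on a short cycle `C → D → C` (possibly `C = D`) in the component
quiver `Σ_A`. -/
def OnShortCycleSigma (C : Set (RMod A)) : Prop :=
  ∃ D, IsComponent D ∧ SigmaArrow C D ∧ SigmaArrow D C

/-- `C` is a generalized standard component: `rad_A^∞(X, Y) = 0` for all `X, Y ∈ C`. -/
def GenStandard (C : Set (RMod A)) : Prop :=
  ∀ X ∈ C, ∀ Y ∈ C, ∀ f : X ⟶ Y, InRadInf f → f = 0

section CompositionFactors

/-- The successive subquotient of a filtration. -/
abbrev subquot {M : RMod A} (X Y : Submodule Aᵐᵒᵖ M) :=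
  Y ⧸ Submodule.comap Y.subtype X

/-- `[M] = [N]` in `K_0(A)` : `M` and `N` have the same composition factors,
including multiplicities: there are composition series of `M` and of `N` whose
simple factors match up to a permutation and isomorphism. -/
def SameCF (M N : RMod A) : Prop :=
  ∃ (n : ℕ) (s : Fin (n+1) → Submodule Aᵐᵒᵖ M) (t : Fin (n+1) → Submodule Aᵐᵒᵖ N)
    (σ : Equiv.Perm (Fin n)),
    Monotone s ∧ Monotone t ∧
    s 0 = ⊥ ∧ s (Fin.last n) = ⊤ ∧ t 0 = ⊥ ∧ t (Fin.last n) = ⊤ ∧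
    (∀ i : Fin n, IsSimpleModule Aᵐᵒᵖ (subquot (s i.castSucc) (s i.succ))) ∧
    (∀ i : Fin n, IsSimpleModule Aᵐᵒᵖ (subquot (t i.castSucc) (t i.succ))) ∧
    ∀ i : Fin n, Nonempty
      ((subquot (s i.castSucc) (s i.succ)) ≃ₗ[Aᵐᵒᵖ]
        (subquot (t ((σ i).castSucc)) (t ((σ i).succ))))

/-- Two components `C` and `D` of `Γ_A` have the same composition factors:
for any `x ∈ K_0(A)`, `x = [M]` for an indecomposable `M ∈ C` iff `x = [N]`
for an indecomposable `N ∈ D`. -/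
def ComponentsSameCF (C D : Set (RMod A)) : Prop :=
  (∀ M ∈ C, ∃ N ∈ D, SameCF M N) ∧ (∀ N ∈ D, ∃ M ∈ C, SameCF M N)

/-- The simple module `S` is a composition factor of `M`. -/
def IsCompFactorOf (S M : RMod A) : Prop :=
  IsSimpleModule Aᵐᵒᵖ S ∧ ∃ (X Y : Submodule Aᵐᵒᵖ M), X ≤ Y ∧
    Nonempty ((subquot X Y) ≃ₗ[Aᵐᵒᵖ] S)

end CompositionFactors

section AlmostSplit

/-- `0 → N → E → M → 0` is a short exact sequence. -/
def SES {X Y Z : RMod A} (f : X ⟶ Y) (g : Y ⟶ Z) : Prop :=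
  Function.Injective f ∧ Function.Surjective g ∧ ∀ y : Y, g y = 0 ↔ ∃ x : X, f x = y

/-- `0 → N → E → M → 0` is an almost split (Auslander–Reiten) sequence. -/
def IsAlmostSplit {N E M : RMod A} (f : N ⟶ E) (g : E ⟶ M) : Prop :=
  Vertex N ∧ Vertex M ∧ fgMod E ∧ SES f g ∧ ¬ IsRetractionHom g ∧
  ∀ (Z : RMod A), fgMod Z → ∀ h : Z ⟶ M, ¬ IsRetractionHom h → ∃ k : Z ⟶ E, k ≫ g = h

/-- `ARTranslate N M` : `N = τ_A M = D Tr M`, i.e. there is an almost split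
sequence `0 → N → E → M → 0`. -/
def ARTranslate (N M : RMod A) : Prop :=
  ∃ (E : RMod A) (f : N ⟶ E) (g : E ⟶ M), IsAlmostSplit f g

end AlmostSplit

section TranslationQuivers

/-- An abstract translation quiver: vertices, arrows, and the translation
(`tau a b` meaning `b = τ a`; `a` is projective when no such `b` exists). -/
structure TransQuiver : Type 1 where
  V : Type
  Arrow : V → V → Prop
  tau : V → V → Prop

/-- The stable tube `ℤA_∞/(τ^r)`: vertices `(i, j)` with `i ∈ ℤ/r` (the τ-orbit)
and `j ≥ 0` (the level, `j = 0` being the mouth); arrows `(i,j) → (i,j+1)` and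
`(i,j+1) → (i+1,j)`; translation `τ(i,j) = (i-1,j)`. -/
def tubeTQ (r : ℕ) : TransQuiver where
  V := ZMod r × ℕ
  Arrow p q := (q.1 = p.1 ∧ q.2 = p.2 + 1) ∨ (p.2 = q.2 + 1 ∧ q.1 = p.1 + 1)
  tau p q := q.1 = p.1 - 1 ∧ q.2 = p.2

/-- The opposite translation quiver (arrows reversed, translation inverted). -/
def TransQuiver.op (Γ : TransQuiver) : TransQuiver where
  V := Γ.V
  Arrow a b := Γ.Arrow b a
  tau a b := Γ.tau b a

/-- A ray (infinite sectional path, maximal at its start) in a translation quiver. -/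
structure IsRay (Γ : TransQuiver) (x : ℕ → Γ.V) : Prop where
  inj : Function.Injective x
  arr : ∀ j, Γ.Arrow (x j) (x (j+1))
  sectional : ∀ j, ¬ Γ.tau (x (j+2)) (x j)
  maximal : ∀ w, Γ.Arrow w (x 0) → Γ.tau (x 1) w

/-- The ray insertion of a translation quiver `Γ` at a ray `x₀ → x₁ → ⋯`:
a new ray of vertices `y₀ → y₁ → ⋯` is inserted, with `y₀` a new projective
vertex; there are new arrows `x_j → y_j`, the arrows `x_j → z` with `z` off the
ray are replaced by arrows `y_j → z`, and the translation is rearranged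
accordingly (`τ y_{j+1} = x_j`, and `τ z = y_{j-1}` for the off-ray successors
`z` of `x_j`). -/
def rayInsert (Γ : TransQuiver) (x : ℕ → Γ.V) : TransQuiver where
  V := Γ.V ⊕ ℕ
  Arrow a b :=
    match a, b with
    | .inl a, .inl b => Γ.Arrow a b ∧ ∀ j, a = x (j+1) → b = x (j+2)
    | .inl a, .inr k => a = x k
    | .inr k, .inl b => ∃ j, k = j + 1 ∧ Γ.Arrow (x (j+1)) b ∧ b ≠ x (j+2)
    | .inr k, .inr l => l = k + 1
  tau a b :=
    match a, b with
    | .inl a, .inl b => Γ.tau a b ∧ ¬ (∃ j, Γ.Arrow (x (j+1)) a ∧ a ≠ x (j+2))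
    | .inl a, .inr k => Γ.Arrow (x (k+1)) a ∧ a ≠ x (k+2)
    | .inr k, .inl b => ∃ j, k = j + 1 ∧ b = x j
    | .inr _, .inr _ => False

/-- Ray tubes: the translation quivers obtained from a stable tube by a finite
(possibly empty) number of ray insertions. -/
inductive IsRayTubeTQ : TransQuiver → Prop
  | base (r : ℕ) (hr : 0 < r) : IsRayTubeTQ (tubeTQ r)
  | insert (Γ : TransQuiver) (x : ℕ → Γ.V) :
      IsRayTubeTQ Γ → IsRay Γ x → IsRayTubeTQ (rayInsert Γ x)

/-- The set of modules `C` realizes the translation quiver `Γ`: there is a map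
from `C` onto the vertices of `Γ`, two modules having the same image iff they
are isomorphic, which identifies the arrows of `Γ_A` between modules of `C`
with the arrows of `Γ` and the Auslander–Reiten translation with the
translation of `Γ`. -/
def Represents (C : Set (RMod A)) (Γ : TransQuiver) : Prop :=
  ∃ φ : RMod A → Γ.V,
    (∀ v : Γ.V, ∃ M ∈ C, φ M = v) ∧
    (∀ M ∈ C, ∀ N ∈ C, (φ M = φ N ↔ Nonempty (M ≅ N))) ∧
    (∀ M ∈ C, ∀ N ∈ C, (ARArrow M N ↔ Γ.Arrow (φ M) (φ N))) ∧
    (∀ M ∈ C, ∀ N ∈ C, (ARTranslate N M ↔ Γ.tau (φ M) (φ N)))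

/-- `C` is a stable tube of rank `r` in `Γ_A`. -/
def IsStableTube (C : Set (RMod A)) (r : ℕ) : Prop :=
  0 < r ∧ IsComponent C ∧ Represents C (tubeTQ r)

/-- `C` is a ray tube in `Γ_A` (obtained from a stable tube by a finite,
possibly empty, number of ray insertions). -/
def IsRayTube (C : Set (RMod A)) : Prop :=
  IsComponent C ∧ ∃ Γ : TransQuiver, IsRayTubeTQ Γ ∧ Represents C Γ

/-- `C` is a coray tube in `Γ_A` (obtained from a stable tube by a finite,
possibly empty, number of coray insertions); equivalently, the translation
quiver of `C` is opposite to a ray tube. -/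
def IsCorayTube (C : Set (RMod A)) : Prop :=
  IsComponent C ∧ ∃ Γ : TransQuiver, IsRayTubeTQ Γ ∧ Represents C Γ.op

/-- `M` lies on the mouth of the component `C`: it has exactly one immediate
predecessor and one immediate successor in `C` (up to isomorphism). -/
def IsMouth (C : Set (RMod A)) (M : RMod A) : Prop :=
  M ∈ C ∧ (∃ P ∈ C, ARArrow P M) ∧ (∃ S ∈ C, ARArrow M S) ∧
  (∀ P ∈ C, ∀ P' ∈ C, ARArrow P M → ARArrow P' M → Nonempty (P ≅ P')) ∧
  (∀ S ∈ C, ∀ S' ∈ C, ARArrow M S → ARArrow M S' → Nonempty (S ≅ S'))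

end TranslationQuivers

/-- `C` is semi-regular: it does not contain both a projective module and an
injective module. -/
def SemiRegular (C : Set (RMod A)) : Prop :=
  ¬ ((∃ P ∈ C, Projective P) ∧ (∃ I ∈ C, Injective I))

/-- `C` admits an external short path: a path `U → V → W` of nonzero
nonisomorphisms in `mod A` with `U, W ∈ C` and `V` (indecomposable) not in `C`. -/
def HasExternalShortPath (C : Set (RMod A)) : Prop :=
  ∃ U ∈ C, ∃ W ∈ C, ∃ V : RMod A, Vertex V ∧ V ∉ C ∧
    ∃ (g : U ⟶ V) (h : V ⟶ W), g ≠ 0 ∧ h ≠ 0 ∧ ¬ IsIso g ∧ ¬ IsIso h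

/-- `C` is a cyclic component: every module of `C` lies on an oriented cycle of
arrows of `Γ_A` contained in `C`. -/
def CyclicComponent (C : Set (RMod A)) : Prop :=
  ∀ M ∈ C, ∃ (n : ℕ) (p : Fin (n+2) → RMod A),
    p 0 = M ∧ p (Fin.last (n+1)) = M ∧ (∀ i, p i ∈ C) ∧
    ∀ i : Fin (n+1), ARArrow (p i.castSucc) (p i.succ)

section Separating

/-- `Γ_A = P ∨ T ∨ Q` with `T` a family of components separating `P` from `Q`:
the components split into `P`, `T`, `Q`; the components of `T` are pairwise
orthogonal and generalized standard; `Hom(T, P) = 0`, `Hom(Q, T) = 0`,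
`Hom(Q, P) = 0`; and every morphism from a module of `P` to a module of `Q`
factors through a finite direct sum of modules of any prescribed component of `T`. -/
structure IsSeparatingFamily (P T Q : Set (Set (RMod A))) : Prop where
  compP : ∀ C ∈ P, IsComponent C
  compT : ∀ C ∈ T, IsComponent C
  compQ : ∀ C ∈ Q, IsComponent C
  cover : ∀ C : Set (RMod A), IsComponent C → C ∈ P ∨ C ∈ T ∨ C ∈ Q
  disjPT : P ∩ T = ∅
  disjPQ : P ∩ Q = ∅
  disjTQ : T ∩ Q = ∅
  orth : ∀ C ∈ T, ∀ D ∈ T, C ≠ D → ∀ X ∈ C, ∀ Y ∈ D, ∀ f : X ⟶ Y, f = 0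
  gstd : ∀ C ∈ T, GenStandard C
  homTP : ∀ C ∈ T, ∀ D ∈ P, ∀ X ∈ C, ∀ Y ∈ D, ∀ f : X ⟶ Y, f = 0
  homQT : ∀ C ∈ Q, ∀ D ∈ T, ∀ X ∈ C, ∀ Y ∈ D, ∀ f : X ⟶ Y, f = 0
  homQP : ∀ C ∈ Q, ∀ D ∈ P, ∀ X ∈ C, ∀ Y ∈ D, ∀ f : X ⟶ Y, f = 0
  factor : ∀ C ∈ T, ∀ CP ∈ P, ∀ CQ ∈ Q, ∀ X ∈ CP, ∀ Y ∈ CQ, ∀ f : X ⟶ Y,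
    ∃ (k : ℕ) (Z : Fin k → RMod A) (_ : ∀ i, Z i ∈ C)
      (g : X ⟶ ⨁ Z) (h : (⨁ Z) ⟶ Y), f = g ≫ h

/-- An artin algebra is concealed canonical iff its Auslander–Reiten quiver
admits a separating family of stable tubes (Lenzing–de la Peña). -/
def IsConcealedCanonical (B : Type) [Ring B] : Prop :=
  ∃ P T Q : Set (Set (RMod B)),
    IsSeparatingFamily P T Q ∧ ∀ C ∈ T, ∃ r : ℕ, IsStableTube C r

/-- An artin algebra is almost concealed canonical iff its Auslander–Reiten
quiver admits a separating family of ray tubes. -/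
def IsAlmostConcealedCanonical (B : Type) [Ring B] : Prop :=
  ∃ P T Q : Set (Set (RMod B)),
    IsSeparatingFamily P T Q ∧ ∀ C ∈ T, IsRayTube C

end Separating

section Annihilators

/-- The annihilator `ann_A(C)` of a family of modules `C`, as a subset of `A`. -/
def annSet (C : Set (RMod A)) : Set A :=
  {a : A | ∀ M ∈ C, ∀ m : M, (op a) • m = 0}

/-- `C` is a faithful family of modules: `ann_A(C) = 0`. -/
def FaithfulFamily (C : Set (RMod A)) : Prop := annSet C = {0}

end Annihilators

section Restriction

variable {B : Type} [Ring B]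

/-- Restriction of scalars `mod B → mod A` along a ring homomorphism
`π : A → B` (for right modules). -/
noncomputable def res (π : A →+* B) : RMod B ⥤ RMod A :=
  ModuleCat.restrictScalars (RingHom.op π)

/-- The component `C'` of `Γ_B` corresponds, under restriction of scalars along
the surjection `π : A → B`, to the component `C` of `Γ_A` (i.e. `C` is the
closure under isomorphism of the image of `C'`). -/
noncomputable def Corresponds (π : A →+* B) (C' : Set (RMod B)) (C : Set (RMod A)) : Prop :=
  (∀ M' ∈ C', (res π).obj M' ∈ C) ∧
  ∀ M ∈ C, ∃ M' ∈ C', Nonempty ((res π).obj M' ≅ M)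

end Restriction

section HomologicalAlgebra

/-- `Ext¹_A(X, Y) = 0`: every short exact sequence `0 → Y → E → X → 0` splits. -/
def Ext1Vanishes (X Y : RMod A) : Prop :=
  ∀ (E : RMod A) (f : Y ⟶ E) (g : E ⟶ X), SES f g → IsRetractionHom g

/-- `Ext²_A(X, Y) = 0`: `Ext¹` vanishes on any first syzygy of `X`. -/
def Ext2Vanishes (X Y : RMod A) : Prop :=
  ∀ (Ω P : RMod A) (f : Ω ⟶ P) (g : P ⟶ X), Projective P → SES f g → Ext1Vanishes Ω Y

/-- `X` has projective dimension at most one. -/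
def PdLeOne (X : RMod A) : Prop :=
  ∃ (P₁ P₀ : RMod A) (f : P₁ ⟶ P₀) (g : P₀ ⟶ X),
    Projective P₁ ∧ Projective P₀ ∧ SES f g

/-- The radical of a module: the intersection of its maximal submodules. -/
def radM (M : RMod A) : Submodule Aᵐᵒᵖ M := sInf {m | IsCoatom m}

/-- The socle of a module: the sum of its simple submodules. -/
def socM (M : RMod A) : Submodule Aᵐᵒᵖ M := sSup {m | IsAtom m}

/-- The top of a module: `top M = M / rad M`. -/
abbrev topM (M : RMod A) := M ⧸ radM M

end HomologicalAlgebra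

end ARTheory
namespace ARTheory

open CategoryTheory

variable {A : Type} [Ring A]

section AuxLemmas

lemma subsingleton_of_id_eq_zero {M : RMod A} (h : 𝟙 M = (0 : M ⟶ M)) : Subsingleton M := by
  have key : ∀ x : M, x = 0 := by
    intro x
    have hx : (𝟙 M) x = (0 : M ⟶ M) x := by rw [h]
    exact hx
  constructor
  intro a b
  rw [key a, key b]

lemma isIso_of_comp_comp_isIso {X Y Z : RMod A} (hX : Indec X) (hY : Indec Y)
    (hZ : ¬ Subsingleton Z) (a : Z ⟶ X) (f : X ⟶ Y) (b : Y ⟶ Z)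
    (h : IsIso (a ≫ f ≫ b)) : IsIso f := by
  have hra : a ≫ (f ≫ b ≫ inv (a ≫ f ≫ b)) = 𝟙 Z := by
    have h1 : (a ≫ f ≫ b) ≫ inv (a ≫ f ≫ b) = 𝟙 Z := IsIso.hom_inv_id _
    rw [← h1]
    simp only [Category.assoc]
  set r : X ⟶ Z := f ≫ b ≫ inv (a ≫ f ≫ b) with hr
  have hidem : (r ≫ a) ≫ (r ≫ a) = r ≫ a := by
    calc (r ≫ a) ≫ r ≫ a = r ≫ (a ≫ r) ≫ a := by simp only [Category.assoc]
    _ = r ≫ a := by rw [hra, Category.id_comp]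
  rcases hX.2 (r ≫ a) hidem with h0 | h1
  · exfalso
    apply hZ
    apply subsingleton_of_id_eq_zero
    calc 𝟙 Z = (a ≫ r) ≫ (a ≫ r) := by rw [hra, Category.id_comp]
    _ = a ≫ (r ≫ a) ≫ r := by simp only [Category.assoc]
    _ = 0 := by rw [h0, Limits.zero_comp, Limits.comp_zero]
  · have hfs : f ≫ (b ≫ inv (a ≫ f ≫ b) ≫ a) = 𝟙 X := by
      calc f ≫ (b ≫ inv (a ≫ f ≫ b) ≫ a)
          = (f ≫ b ≫ inv (a ≫ f ≫ b)) ≫ a := by simp only [Category.assoc]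
      _ = r ≫ a := by rw [hr]
      _ = 𝟙 X := h1
    set s : Y ⟶ X := b ≫ inv (a ≫ f ≫ b) ≫ a with hs
    have hidem2 : (s ≫ f) ≫ (s ≫ f) = s ≫ f := by
      calc (s ≫ f) ≫ s ≫ f = s ≫ (f ≫ s) ≫ f := by simp only [Category.assoc]
      _ = s ≫ f := by rw [hfs, Category.id_comp]
    rcases hY.2 (s ≫ f) hidem2 with h0 | h2
    · exfalso
      apply hX.1
      apply subsingleton_of_id_eq_zero
      have hf0 : f = 0 := by
        have hstep : f = (f ≫ s) ≫ f := by rw [hfs, Category.id_comp]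
        rw [hstep, Category.assoc, h0, Limits.comp_zero]
      rw [← hfs, hf0, Limits.zero_comp]
    · exact ⟨⟨s, hfs, h2⟩⟩

lemma isIso_of_not_inRad {X Y : RMod A} (hX : Indec X) (hY : Indec Y)
    (f : X ⟶ Y) (h : ¬ InRad f) : IsIso f := by
  unfold InRad at h
  push_neg at h
  obtain ⟨Z, hfg, hind, g, k, hiso⟩ := h
  exact isIso_of_comp_comp_isIso hX hY hind.1 g f k hiso

lemma sameComp_of_iso {X Y : RMod A} (hX : Vertex X) (hY : Vertex Y) (e : X ≅ Y) :
    SameComp X Y :=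
  Relation.ReflTransGen.single ⟨hX, hY, Or.inl ⟨e⟩⟩

lemma arrel_symm : Symmetric (ARRel (A := A)) := by
  rintro X Y ⟨hX, hY, h⟩
  refine ⟨hY, hX, ?_⟩
  rcases h with he | h | h
  · obtain ⟨e⟩ := he
    exact Or.inl ⟨e.symm⟩
  · exact Or.inr (Or.inr h)
  · exact Or.inr (Or.inl h)

lemma sameComp_symm {X Y : RMod A} (h : SameComp X Y) : SameComp Y X :=
  by
    haveI : Std.Symm (ARRel (A := A)) := ⟨fun _ _ h => arrel_symm h⟩
    exact Std.Symm.symm (r := Relation.ReflTransGen ARRel) X Y h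

lemma inRad_of_not_sameComp {X Y : RMod A} (hX : Vertex X) (hY : Vertex Y)
    (hXY : ¬ SameComp X Y) (f : X ⟶ Y) : InRad f := by
  by_contra h
  have hiso := isIso_of_not_inRad hX.2 hY.2 f h
  exact hXY (sameComp_of_iso hX hY (asIso f))

lemma not_section_of_not_sameComp {X Y : RMod A} (hX : Vertex X) (hY : Vertex Y)
    (hXY : ¬ SameComp X Y) (f : X ⟶ Y) : ¬ IsSectionHom f := by
  rintro ⟨r, hrf⟩
  exact inRad_of_not_sameComp hX hY hXY f X hX.1 hX.2 (𝟙 X) r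
    (by rw [Category.id_comp, hrf]; infer_instance)

lemma not_retraction_of_not_sameComp {X Y : RMod A} (hX : Vertex X) (hY : Vertex Y)
    (hXY : ¬ SameComp X Y) (f : X ⟶ Y) : ¬ IsRetractionHom f := by
  rintro ⟨s, hsf⟩
  exact inRad_of_not_sameComp hX hY hXY f Y hY.1 hY.2 s (𝟙 Y)
    (by rw [Category.comp_id, hsf]; infer_instance)

lemma exists_factorization {X Y : RMod A} (hX : Vertex X) (hY : Vertex Y)
    (hXY : ¬ SameComp X Y) (f : X ⟶ Y) :
    ∃ (Z : RMod A) (g : X ⟶ Z) (h : Z ⟶ Y),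
      fgMod Z ∧ f = g ≫ h ∧ ¬ IsSectionHom g ∧ ¬ IsRetractionHom h := by
  have hsec := not_section_of_not_sameComp hX hY hXY f
  have hret := not_retraction_of_not_sameComp hX hY hXY f
  have hirr : ¬ Irred f := fun hi =>
    hXY (Relation.ReflTransGen.single ⟨hX, hY, Or.inr (Or.inl ⟨hX, hY, f, hi⟩)⟩)
  have hcl : ¬ ∀ (Z : RMod A), fgMod Z → ∀ (g : X ⟶ Z) (h : Z ⟶ Y),
      f = g ≫ h → IsSectionHom g ∨ IsRetractionHom h := fun hc => hirr ⟨hsec, hret, hc⟩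
  push_neg at hcl
  obtain ⟨Z, hfg, g, h, hfac, hor⟩ := hcl
  exact ⟨Z, g, h, hfg, hfac, hor.1, hor.2⟩

lemma radComp_comp_inRad : ∀ (n : ℕ) {X Z Y : RMod A} (c : X ⟶ Z) (t : Z ⟶ Y),
    fgMod Z → RadComp n c → InRad t → RadComp (n + 1) (c ≫ t) := by
  intro n
  induction n with
  | zero => intro X Z Y c t hZ hc ht; exact ⟨Z, c, t, hZ, hc, ht, rfl⟩
  | succ n ihn =>
    intro X Z Y c t hZ hc ht
    obtain ⟨W, a, b, hW, ha, hb, hab⟩ := hc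
    exact ⟨W, a, b ≫ t, hW, ha, ihn b t hZ hb ht, by rw [hab, Category.assoc]⟩

lemma inRadPow_comp_left {n : ℕ} {X Z Y : RMod A} (g : X ⟶ Z) (hZ : fgMod Z) (hg : InRad g)
    {c : Z ⟶ Y} (hc : InRadPow n c) : InRadPow (n + 1) (g ≫ c) := by
  unfold InRadPow at hc ⊢
  induction hc using AddSubgroup.closure_induction with
  | mem x hx => exact AddSubgroup.subset_closure ⟨Z, g, x, hZ, hg, hx, rfl⟩
  | zero => rw [Limits.comp_zero]; exact zero_mem _
  | add x y hx hy ihx ihy => rw [Preadditive.comp_add]; exact add_mem ihx ihy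
  | neg x hx ihx => rw [Preadditive.comp_neg]; exact neg_mem ihx

lemma inRadPow_comp_right {n : ℕ} {X Z Y : RMod A} {c : X ⟶ Z} (hc : InRadPow n c)
    (t : Z ⟶ Y) (hZ : fgMod Z) (ht : InRad t) : InRadPow (n + 1) (c ≫ t) := by
  unfold InRadPow at hc ⊢
  induction hc using AddSubgroup.closure_induction with
  | mem x hx => exact AddSubgroup.subset_closure (radComp_comp_inRad n x t hZ hx ht)
  | zero => rw [Limits.zero_comp]; exact zero_mem _
  | add x y hx hy ihx ihy => rw [Preadditive.add_comp]; exact add_mem ihx ihy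
  | neg x hx ihx => rw [Preadditive.neg_comp]; exact neg_mem ihx

lemma exists_piece {Z : RMod A} (W : Submodule Aᵐᵒᵖ Z)
    (u : ModuleCat.of Aᵐᵒᵖ W ⟶ ModuleCat.of Aᵐᵒᵖ W)
    (hidem : u ≫ u = u) (hne : u ≠ 𝟙 (ModuleCat.of Aᵐᵒᵖ W)) :
    ∃ (V : Submodule Aᵐᵒᵖ Z) (π : ModuleCat.of Aᵐᵒᵖ W ⟶ ModuleCat.of Aᵐᵒᵖ V)
      (ι : ModuleCat.of Aᵐᵒᵖ V ⟶ ModuleCat.of Aᵐᵒᵖ W),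
      V < W ∧ Function.Surjective π ∧ π ≫ ι = u := by
  refine ⟨(LinearMap.range u.hom).map W.subtype,
    ModuleCat.ofHom ((Submodule.equivSubtypeMap W (LinearMap.range u.hom)).toLinearMap.comp
      (LinearMap.rangeRestrict u.hom)),
    ModuleCat.ofHom (Submodule.inclusion (Submodule.map_subtype_le W (LinearMap.range u.hom))), ?_, ?_, ?_⟩
  · refine lt_of_le_of_ne (Submodule.map_subtype_le _ _) (fun hVW => hne ?_)
    have hsurj : Function.Surjective u := by
      intro w
      have hw : W.subtype w ∈ (LinearMap.range u.hom).map W.subtype := by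
        rw [hVW]; exact SetLike.coe_mem (w : ↥W)
      rcases hw with ⟨v, hv, hvw⟩
      rcases hv with ⟨x, rfl⟩
      exact ⟨x, Submodule.injective_subtype W hvw⟩
    refine ModuleCat.hom_ext (LinearMap.ext fun w => ?_)
    obtain ⟨x, rfl⟩ := hsurj w
    exact LinearMap.congr_fun (congrArg ModuleCat.Hom.hom hidem) x
  · intro v
    obtain ⟨y, hy⟩ := (Submodule.equivSubtypeMap W (LinearMap.range u.hom)).surjective v
    obtain ⟨x, hx⟩ := LinearMap.surjective_rangeRestrict u.hom y
    refine ⟨x, ?_⟩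
    show (Submodule.equivSubtypeMap W (LinearMap.range u.hom)) ((LinearMap.rangeRestrict u.hom) x) = v
    rw [hx]
    exact hy
  · refine ModuleCat.hom_ext (LinearMap.ext fun w => Subtype.ext ?_)
    rfl

lemma inner_lemma (n : ℕ)
    (IH : ∀ {X Y : RMod A}, Vertex X → Vertex Y → ¬ SameComp X Y → ∀ f : X ⟶ Y, InRadPow n f)
    {X Y : RMod A} (hX : Vertex X) (hY : Vertex Y) (hXY : ¬ SameComp X Y)
    (Z : RMod A) [IsArtinian Aᵐᵒᵖ Z] (W : Submodule Aᵐᵒᵖ Z) :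
    ∀ (_ : fgMod (ModuleCat.of Aᵐᵒᵖ W)) (g : X ⟶ ModuleCat.of Aᵐᵒᵖ W)
      (h : ModuleCat.of Aᵐᵒᵖ W ⟶ Y), ¬ IsSectionHom g → ¬ IsRetractionHom h →
      InRadPow (n + 1) (g ≫ h) := by
  induction W using IsArtinian.induction with
  | _ W ihW =>
  intro hfg g h hg hh
  by_cases hss : Subsingleton (ModuleCat.of Aᵐᵒᵖ W)
  · have hgh : g ≫ h = 0 := by
      refine ModuleCat.hom_ext (LinearMap.ext fun x => ?_)
      have h0 : g x = 0 := Subsingleton.elim _ _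
      show h (g x) = 0
      rw [h0, map_zero]
    rw [hgh]; exact zero_mem _
  · by_cases hind : Indec (ModuleCat.of Aᵐᵒᵖ W)
    · have hWv : Vertex (ModuleCat.of Aᵐᵒᵖ W) := ⟨hfg, hind⟩
      have hor : ¬ SameComp X (ModuleCat.of Aᵐᵒᵖ W) ∨
          ¬ SameComp (ModuleCat.of Aᵐᵒᵖ W) Y := by
        by_contra hcon
        push_neg at hcon
        exact hXY (hcon.1.trans hcon.2)
      have hgrad : InRad g := by
        by_contra hng
        have : IsIso g := isIso_of_not_inRad hX.2 hind g hng
        exact hg ⟨inv g, IsIso.hom_inv_id g⟩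
      have hhrad : InRad h := by
        by_contra hnh
        have : IsIso h := isIso_of_not_inRad hind hY.2 h hnh
        exact hh ⟨inv h, IsIso.inv_hom_id h⟩
      rcases hor with hs | hs
      · exact inRadPow_comp_right (IH hX hWv hs g) h hfg hhrad
      · exact inRadPow_comp_left g hfg hgrad (IH hWv hY hs h)
    · have hEx : ∃ e : ModuleCat.of Aᵐᵒᵖ W ⟶ ModuleCat.of Aᵐᵒᵖ W,
          e ≫ e = e ∧ e ≠ 0 ∧ e ≠ 𝟙 (ModuleCat.of Aᵐᵒᵖ W) := by
        by_contra hcon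
        push_neg at hcon
        refine hind ⟨hss, fun e he => ?_⟩
        by_cases he0 : e = 0
        · exact Or.inl he0
        · exact Or.inr (hcon e he he0)
      obtain ⟨e, hee, he0, he1⟩ := hEx
      have hee' : (𝟙 (ModuleCat.of Aᵐᵒᵖ W) - e) ≫ (𝟙 (ModuleCat.of Aᵐᵒᵖ W) - e)
          = 𝟙 (ModuleCat.of Aᵐᵒᵖ W) - e := by
        rw [Preadditive.sub_comp, Preadditive.comp_sub, Preadditive.comp_sub,
          Category.id_comp, Category.comp_id, hee]
        abel
      have hne' : 𝟙 (ModuleCat.of Aᵐᵒᵖ W) - e ≠ 𝟙 (ModuleCat.of Aᵐᵒᵖ W) := by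
        intro hcon
        exact he0 (by rwa [sub_eq_self] at hcon)
      obtain ⟨V₁, π₁, ι₁, hV₁lt, hπ₁s, hπι₁⟩ := exists_piece W e hee he1
      obtain ⟨V₂, π₂, ι₂, hV₂lt, hπ₂s, hπι₂⟩ := exists_piece W (𝟙 _ - e) hee' hne'
      haveI : Module.Finite Aᵐᵒᵖ (ModuleCat.of Aᵐᵒᵖ W) := hfg
      have hfg₁ : fgMod (ModuleCat.of Aᵐᵒᵖ V₁) := Module.Finite.of_surjective π₁.hom hπ₁s
      have hfg₂ : fgMod (ModuleCat.of Aᵐᵒᵖ V₂) := Module.Finite.of_surjective π₂.hom hπ₂s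
      have h1 := ihW V₁ hV₁lt hfg₁ (g ≫ π₁) (ι₁ ≫ h)
        (fun ⟨r, hr⟩ => hg ⟨π₁ ≫ r, by rw [← Category.assoc]; exact hr⟩)
        (fun ⟨s, hsr⟩ => hh ⟨s ≫ ι₁, by rw [Category.assoc]; exact hsr⟩)
      have h2 := ihW V₂ hV₂lt hfg₂ (g ≫ π₂) (ι₂ ≫ h)
        (fun ⟨r, hr⟩ => hg ⟨π₂ ≫ r, by rw [← Category.assoc]; exact hr⟩)
        (fun ⟨s, hsr⟩ => hh ⟨s ≫ ι₂, by rw [Category.assoc]; exact hsr⟩)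
      have hsum : (g ≫ π₁) ≫ (ι₁ ≫ h) + (g ≫ π₂) ≫ (ι₂ ≫ h) = g ≫ h := by
        have e1 : (g ≫ π₁) ≫ (ι₁ ≫ h) = g ≫ (π₁ ≫ ι₁) ≫ h := by
          simp only [Category.assoc]
        have e2 : (g ≫ π₂) ≫ (ι₂ ≫ h) = g ≫ (π₂ ≫ ι₂) ≫ h := by
          simp only [Category.assoc]
        rw [e1, e2, hπι₁, hπι₂, ← Preadditive.comp_add, ← Preadditive.add_comp]
        have : e + (𝟙 (ModuleCat.of Aᵐᵒᵖ W) - e) = 𝟙 (ModuleCat.of Aᵐᵒᵖ W) := by abel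
        rw [this, Category.id_comp]
      rw [← hsum]
      exact add_mem h1 h2

lemma inRadPow_of_not_sameComp [IsArtinianRing Aᵐᵒᵖ] :
    ∀ (n : ℕ) {X Y : RMod A}, Vertex X → Vertex Y → ¬ SameComp X Y →
      ∀ f : X ⟶ Y, InRadPow n f := by
  intro n
  induction n with
  | zero =>
    intro X Y hX hY hXY f
    exact AddSubgroup.subset_closure (inRad_of_not_sameComp hX hY hXY f)
  | succ n IH =>
    intro X Y hX hY hXY f
    obtain ⟨Z, g, h, hfgZ, hfac, hg, hh⟩ := exists_factorization hX hY hXY f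
    haveI : Module.Finite Aᵐᵒᵖ Z := hfgZ
    haveI : IsArtinian Aᵐᵒᵖ Z := isArtinian_of_fg_of_artinian'
    set φ : Z ⟶ ModuleCat.of Aᵐᵒᵖ (⊤ : Submodule Aᵐᵒᵖ Z) :=
      ModuleCat.ofHom (LinearEquiv.ofTop (⊤ : Submodule Aᵐᵒᵖ Z) rfl).symm.toLinearMap with hφ
    set ψ : ModuleCat.of Aᵐᵒᵖ (⊤ : Submodule Aᵐᵒᵖ Z) ⟶ Z :=
      ModuleCat.ofHom (⊤ : Submodule Aᵐᵒᵖ Z).subtype with hψ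
    have hφψ : φ ≫ ψ = 𝟙 Z := by
      refine ModuleCat.hom_ext (LinearMap.ext fun z => ?_)
      rfl
    have hfgT : fgMod (ModuleCat.of Aᵐᵒᵖ (⊤ : Submodule Aᵐᵒᵖ Z)) :=
      Module.Finite.of_surjective φ.hom
        (LinearEquiv.ofTop (⊤ : Submodule Aᵐᵒᵖ Z) rfl).symm.surjective
    have key := inner_lemma n (fun {X' Y'} a b c f' => IH a b c f') hX hY hXY Z ⊤ hfgT
      (g ≫ φ) (ψ ≫ h)
      (fun ⟨r, hr⟩ => hg ⟨φ ≫ r, by rw [← Category.assoc]; exact hr⟩)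
      (fun ⟨s, hsr⟩ => hh ⟨s ≫ ψ, by rw [Category.assoc]; exact hsr⟩)
    have heq : (g ≫ φ) ≫ ψ ≫ h = g ≫ h := by
      rw [Category.assoc, ← Category.assoc φ ψ h, hφψ, Category.id_comp]
    rw [hfac, ← heq]
    exact key

lemma vertex_of_mem {C : Set (RMod A)} (hC : IsComponent C) {M : RMod A} (hM : M ∈ C) :
    Vertex M := by
  obtain ⟨M₀, hM₀, rfl⟩ := hC
  exact hM.1

lemma component_eq_of_sameComp {C D : Set (RMod A)} (hC : IsComponent C) (hD : IsComponent D)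
    {X Y : RMod A} (hX : X ∈ C) (hY : Y ∈ D) (h : SameComp X Y) : C = D := by
  obtain ⟨M₀, hM₀v, rfl⟩ := hC
  obtain ⟨M₁, hM₁v, rfl⟩ := hD
  have h01 : SameComp M₀ M₁ := (hX.2.trans h).trans (sameComp_symm hY.2)
  ext N
  constructor
  · rintro ⟨hNv, hN⟩; exact ⟨hNv, (sameComp_symm h01).trans hN⟩
  · rintro ⟨hNv, hN⟩; exact ⟨hNv, h01.trans hN⟩

lemma subsingleton_of_sameCF_zero {P : RMod A}
    (s : Fin 1 → Submodule Aᵐᵒᵖ P) (hs0 : s 0 = ⊥) (hsl : s (Fin.last 0) = ⊤) :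
    Subsingleton P := by
  have hbt : (⊥ : Submodule Aᵐᵒᵖ P) = ⊤ := by
    rw [← hs0, ← hsl]
    congr 1
  constructor
  intro a b
  have ha : a ∈ (⊥ : Submodule Aᵐᵒᵖ P) := by rw [hbt]; exact Submodule.mem_top
  have hb : b ∈ (⊥ : Submodule Aᵐᵒᵖ P) := by rw [hbt]; exact Submodule.mem_top
  rw [Submodule.mem_bot] at ha hb
  rw [ha, hb]

lemma exists_nonzero_to_of_sameCF {P N : RMod A} (hproj : Projective P)
    (hnt : ¬ Subsingleton P) (hcf : SameCF P N) : ∃ f : P ⟶ N, f ≠ 0 := by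
  classical
  obtain ⟨n, s, t, σ, hsm, htm, hs0, hsl, ht0, htl, hssimp, htsimp, hiso⟩ := hcf
  rcases n with _ | m
  · exact absurd (subsingleton_of_sameCF_zero s hs0 hsl) hnt
  · set i : Fin (m + 1) := Fin.last m with hi
    have hstop : s i.succ = ⊤ := by rw [hi, Fin.succ_last]; exact hsl
    set K : Submodule Aᵐᵒᵖ (s i.succ) :=
      Submodule.comap (s i.succ).subtype (s i.castSucc) with hK
    set β : P →ₗ[Aᵐᵒᵖ] subquot (s i.castSucc) (s i.succ) :=
      K.mkQ.comp (LinearEquiv.ofTop (s i.succ) hstop).symm.toLinearMap with hβ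
    have hβs : Function.Surjective β := by
      rw [hβ, LinearMap.coe_comp]
      exact (Submodule.mkQ_surjective K).comp
        (LinearEquiv.ofTop (s i.succ) hstop).symm.surjective
    obtain ⟨ξ⟩ := hiso i
    set Yt := t (σ i).succ with hYt
    set Kt : Submodule Aᵐᵒᵖ Yt :=
      Submodule.comap Yt.subtype (t (σ i).castSucc) with hKt
    set w : P ⟶ ModuleCat.of Aᵐᵒᵖ (subquot (t (σ i).castSucc) (t (σ i).succ)) :=
      ModuleCat.ofHom (ξ.toLinearMap.comp β) with hw
    have hwne : w ≠ 0 := by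
      haveI : IsSimpleModule Aᵐᵒᵖ (subquot (s i.castSucc) (s i.succ)) := hssimp i
      haveI := IsSimpleModule.nontrivial Aᵐᵒᵖ (subquot (s i.castSucc) (s i.succ))
      obtain ⟨x, hx0⟩ := exists_ne (0 : subquot (s i.castSucc) (s i.succ))
      obtain ⟨p, hp⟩ := hβs x
      intro h0
      apply hx0
      have hx : ξ x = 0 := by
        have := LinearMap.congr_fun (congrArg ModuleCat.Hom.hom h0) p
        rw [hw] at this
        rw [← hp]
        exact this
      have : ξ x = ξ 0 := by rw [hx, map_zero]
      exact ξ.injective this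
    haveI : CategoryTheory.Projective P := hproj
    set q : ModuleCat.of Aᵐᵒᵖ Yt ⟶
        ModuleCat.of Aᵐᵒᵖ (subquot (t (σ i).castSucc) (t (σ i).succ)) := ModuleCat.ofHom Kt.mkQ with hq
    haveI : Epi q := (ModuleCat.epi_iff_surjective q).mpr (Submodule.mkQ_surjective Kt)
    refine ⟨Projective.factorThru w q ≫
      (ModuleCat.ofHom Yt.subtype : ModuleCat.of Aᵐᵒᵖ Yt ⟶ N), fun h0 => hwne ?_⟩
    have hl0 : Projective.factorThru w q = 0 := by
      refine ModuleCat.hom_ext (LinearMap.ext fun p => ?_)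
      have := LinearMap.congr_fun (congrArg ModuleCat.Hom.hom h0) p
      exact Subtype.ext this
    rw [← Projective.factorThru_comp w q, hl0, Limits.zero_comp]

lemma exists_nonzero_from_of_sameCF {I N : RMod A} (hinj : Injective I)
    (hnt : ¬ Subsingleton I) (hcf : SameCF I N) : ∃ f : N ⟶ I, f ≠ 0 := by
  classical
  obtain ⟨n, s, t, σ, hsm, htm, hs0, hsl, ht0, htl, hssimp, htsimp, hiso⟩ := hcf
  rcases n with _ | m
  · exact absurd (subsingleton_of_sameCF_zero s hs0 hsl) hnt
  · set i : Fin (m + 1) := 0 with hi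
    have hsbot : s i.castSucc = ⊥ := by
      rw [hi, Fin.castSucc_zero']; exact hs0
    set K : Submodule Aᵐᵒᵖ (s i.succ) :=
      Submodule.comap (s i.succ).subtype (s i.castSucc) with hK
    have hKbot : K = ⊥ := by
      rw [hK, hsbot, Submodule.comap_bot, Submodule.ker_subtype]
    set μ : subquot (s i.castSucc) (s i.succ) →ₗ[Aᵐᵒᵖ] I :=
      (s i.succ).subtype.comp (Submodule.quotEquivOfEqBot K hKbot).toLinearMap with hμ
    have hμinj : Function.Injective μ := by
      rw [hμ, LinearMap.coe_comp]
      exact (Submodule.injective_subtype _).comp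
        (Submodule.quotEquivOfEqBot K hKbot).injective
    obtain ⟨ξ⟩ := hiso i
    set Yt := t (σ i).succ with hYt
    set Kt : Submodule Aᵐᵒᵖ Yt :=
      Submodule.comap Yt.subtype (t (σ i).castSucc) with hKt
    set w : ModuleCat.of Aᵐᵒᵖ Yt ⟶ I :=
      ModuleCat.ofHom (μ.comp (ξ.symm.toLinearMap.comp Kt.mkQ)) with hw
    have hwne : w ≠ 0 := by
      haveI : IsSimpleModule Aᵐᵒᵖ (subquot (t (σ i).castSucc) (t (σ i).succ)) := htsimp (σ i)
      haveI := IsSimpleModule.nontrivial Aᵐᵒᵖ (subquot (t (σ i).castSucc) (t (σ i).succ))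
      obtain ⟨x, hx0⟩ := exists_ne (0 : subquot (t (σ i).castSucc) (t (σ i).succ))
      obtain ⟨y, hy⟩ := Submodule.mkQ_surjective Kt x
      intro h0
      apply hx0
      have happ : μ (ξ.symm (Kt.mkQ y)) = 0 := by
        have h' := LinearMap.congr_fun (congrArg ModuleCat.Hom.hom h0) y
        exact h'
      rw [hy] at happ
      have hξ0 : ξ.symm x = 0 := by
        apply hμinj
        rw [happ, map_zero]
      calc x = ξ (ξ.symm x) := (ξ.apply_symm_apply x).symm
      _ = ξ 0 := by rw [hξ0]
      _ = 0 := map_zero ξ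
    set ι : ModuleCat.of Aᵐᵒᵖ Yt ⟶ N := ModuleCat.ofHom Yt.subtype with hι
    haveI : Mono ι := (ModuleCat.mono_iff_injective ι).mpr (Submodule.injective_subtype Yt)
    haveI : CategoryTheory.Injective I := hinj
    refine ⟨Injective.factorThru w ι, fun h0 => hwne ?_⟩
    rw [← Injective.comp_factorThru w ι, h0, Limits.comp_zero]

end AuxLemmas

end ARTheory

open ARTheory

/-- **Step (1).** Let `A` be an artin algebra, and `𝒞`, `𝒟` components of `Γ_A`
with the same composition factors such that `𝒞 ≠ 𝒟` and `𝒞` does not lie on a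
short cycle in the component quiver `Σ_A`. Then `𝒞` is a semi-regular component
of `Γ_A`, i.e. `𝒞` does not contain both a projective module and an injective
module. -/
theorem component_is_semiregular
    (R A : Type) [CommRing R] [IsArtinianRing R] [Ring A] [Algebra R A] [Module.Finite R A]
    (C D : Set (RMod A)) (hC : IsComponent C) (hD : IsComponent D)
    (hsame : ComponentsSameCF C D) (hne : C ≠ D)
    (hnocycle : ¬ OnShortCycleSigma C) :
    SemiRegular C := by
  haveI : Module.Finite R Aᵐᵒᵖ :=
    Module.Finite.equiv (MulOpposite.opLinearEquiv R : A ≃ₗ[R] Aᵐᵒᵖ)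
  haveI : IsArtinianRing Aᵐᵒᵖ := IsArtinianRing.of_finite R Aᵐᵒᵖ
  rintro ⟨⟨P, hPC, hPproj⟩, ⟨I, hIC, hIinj⟩⟩
  have hPv : Vertex P := vertex_of_mem hC hPC
  have hIv : Vertex I := vertex_of_mem hC hIC
  obtain ⟨NP, hNPD, hcfP⟩ := hsame.1 P hPC
  obtain ⟨NI, hNID, hcfI⟩ := hsame.1 I hIC
  have hNPv : Vertex NP := vertex_of_mem hD hNPD
  have hNIv : Vertex NI := vertex_of_mem hD hNID
  obtain ⟨u, hu⟩ := exists_nonzero_to_of_sameCF hPproj hPv.2.1 hcfP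
  obtain ⟨v, hv⟩ := exists_nonzero_from_of_sameCF hIinj hIv.2.1 hcfI
  have hPN : ¬ SameComp P NP := fun hs => hne (component_eq_of_sameComp hC hD hPC hNPD hs)
  have hNI2 : ¬ SameComp NI I := fun hs =>
    hne (component_eq_of_sameComp hC hD hIC hNID (sameComp_symm hs))
  exact hnocycle ⟨D, hD,
    ⟨P, hPC, NP, hNPD, u, hu, fun k => inRadPow_of_not_sameComp k hPv hNPv hPN u⟩,
    ⟨NI, hNID, I, hIC, v, hv, fun k => inRadPow_of_not_sameComp k hNIv hIv hNI2 v⟩⟩
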